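/- For the no-confounding model class, the sets of observational distributions induced by the four fairness null hypotheses (graphical, counterfactual, interventional, observational) coincide: each equals the set of joint distributions P(S,D,A) factorizing as P(S) ⊗ P(D|S) ⊗ P(A|D) (i.e., satisfying A ⟂ S | D). In particular, any distribution with A ⟂ S | D is realized by an SCM in which S is not a parent of A. -/

import Mathlib

open MeasureTheory ProbabilityTheory
open scoped ENNReal

/-- Conditional independence `A ⟂ S | D` for a joint distribution on
`(S, D, A)`, expressed in product form. -/
def ObsCI {𝓓 : Type} [MeasurableSpace 𝓓]
    (P : Measure (Bool × 𝓓 × Bool)) : Prop :=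
  ∀ (s : Bool) (d : 𝓓) (a : Bool),
    P {v | v.1 = s ∧ v.2.1 = d ∧ v.2.2 = a} * P {v | v.2.1 = d}
      = P {v | v.2.1 = d ∧ v.2.2 = a} * P {v | v.1 = s ∧ v.2.1 = d}

/-- `P` is the observational distribution of an SCM in the no-confounding
model class satisfying the given fairness property of the structural
function `f_A` and the random variables. -/
def RealizableNoCf {𝓓 : Type} [MeasurableSpace 𝓓]
    (P : Measure (Bool × 𝓓 × Bool))
    (fair : ∀ {Ω 𝓤A : Type} [MeasurableSpace Ω], Measure Ω →
        (Ω → Bool) → (Ω → 𝓓) → (Ω → 𝓤A) →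
        (Bool → 𝓓 → 𝓤A → Bool) → Prop) : Prop :=
  ∃ (Ω 𝓤A : Type) (_ : MeasurableSpace Ω) (_ : MeasurableSpace 𝓤A)
    (μ : Measure Ω) (_ : IsProbabilityMeasure μ)
    (S : Ω → Bool) (D : Ω → 𝓓) (UA : Ω → 𝓤A)
    (fA : Bool → 𝓓 → 𝓤A → Bool),
    Measurable S ∧ Measurable D ∧ Measurable UA ∧
    (∀ s d, Measurable (fA s d)) ∧
    IndepFun (fun ω => (S ω, D ω)) UA μ ∧
    fair μ S D UA fA ∧
    Measure.map (fun ω => (S ω, D ω, fA (S ω) (D ω) (UA ω))) μ = P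

set_option linter.unusedSectionVars false

namespace Stmt11Aux

lemma measurableSet_all {α : Type*} [MeasurableSpace α] [MeasurableSingletonClass α]
    [Finite α] (s : Set α) : MeasurableSet s := s.toFinite.measurableSet

lemma measurable_comp {𝓓 Ω 𝓤A : Type} [MeasurableSpace 𝓓] [MeasurableSingletonClass 𝓓]
    [Fintype 𝓓] [MeasurableSpace Ω] [MeasurableSpace 𝓤A]
    {S : Ω → Bool} {D : Ω → 𝓓} {UA : Ω → 𝓤A} {fA : Bool → 𝓓 → 𝓤A → Bool}
    (hS : Measurable S) (hD : Measurable D) (hUA : Measurable UA)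
    (hfA : ∀ s d, Measurable (fA s d)) :
    Measurable (fun ω => fA (S ω) (D ω) (UA ω)) := by
  have : Countable 𝓓 := Finite.to_countable
  apply measurable_to_countable'
  intro a
  have h : (fun ω => fA (S ω) (D ω) (UA ω)) ⁻¹' {a} =
      ⋃ s : Bool, ⋃ d : 𝓓,
        ({ω | S ω = s} ∩ {ω | D ω = d} ∩ ((fun ω => fA s d (UA ω)) ⁻¹' {a})) := by
    ext ω
    simp only [Set.mem_preimage, Set.mem_singleton_iff, Set.mem_iUnion, Set.mem_inter_iff,
      Set.mem_setOf_eq]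
    constructor
    · intro h; exact ⟨S ω, D ω, ⟨rfl, rfl⟩, h⟩
    · rintro ⟨s, d, ⟨hs, hd⟩, h⟩; rw [hs, hd]; exact h
  rw [h]
  exact MeasurableSet.iUnion fun s => MeasurableSet.iUnion fun d =>
    (((hS (measurableSet_singleton s)).inter (hD (measurableSet_singleton d))).inter
      ((hfA s d).comp hUA (measurableSet_singleton a)))

lemma forward_core {𝓓 Ω 𝓤A : Type} [MeasurableSpace 𝓓] [MeasurableSingletonClass 𝓓]
    [Fintype 𝓓] [MeasurableSpace Ω] [MeasurableSpace 𝓤A]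
    (μ : Measure Ω) [IsProbabilityMeasure μ]
    {S : Ω → Bool} {D : Ω → 𝓓} {UA : Ω → 𝓤A} {fA : Bool → 𝓓 → 𝓤A → Bool}
    (hS : Measurable S) (hD : Measurable D) (hUA : Measurable UA)
    (hfA : ∀ s d, Measurable (fA s d))
    (hind : IndepFun (fun ω => (S ω, D ω)) UA μ)
    (hq : ∀ s d a, μ {ω | fA s d (UA ω) = a} = μ {ω | fA true d (UA ω) = a})
    (P : Measure (Bool × 𝓓 × Bool))
    (hmap : Measure.map (fun ω => (S ω, D ω, fA (S ω) (D ω) (UA ω))) μ = P) :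
    ObsCI P := by
  intro s d a
  have hT : Measurable (fun ω => (S ω, D ω, fA (S ω) (D ω) (UA ω))) :=
    (hS.prodMk (hD.prodMk (measurable_comp hS hD hUA hfA)))
  -- cell formula
  have cell : ∀ (s : Bool), μ {ω | S ω = s ∧ D ω = d ∧ fA (S ω) (D ω) (UA ω) = a}
      = μ {ω | S ω = s ∧ D ω = d} * μ {ω | fA true d (UA ω) = a} := by
    intro s
    have h1 : {ω | S ω = s ∧ D ω = d ∧ fA (S ω) (D ω) (UA ω) = a}
        = (fun ω => (S ω, D ω)) ⁻¹' {(s, d)} ∩ UA ⁻¹' ((fA s d) ⁻¹' {a}) := by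
      ext ω
      simp only [Set.mem_setOf_eq, Set.mem_inter_iff, Set.mem_preimage,
        Set.mem_singleton_iff, Prod.ext_iff]
      constructor
      · rintro ⟨h1, h2, h3⟩; rw [h1, h2] at h3 ⊢; exact ⟨⟨rfl, rfl⟩, h3⟩
      · rintro ⟨⟨h1, h2⟩, h3⟩; rw [h1, h2]; exact ⟨rfl, rfl, h3⟩
    have h2 : (fun ω => (S ω, D ω)) ⁻¹' {(s, d)} = {ω | S ω = s ∧ D ω = d} := by
      ext ω; simp [Prod.ext_iff]
    rw [h1, hind.measure_inter_preimage_eq_mul _ _ (measurableSet_singleton _)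
      ((hfA s d) (measurableSet_singleton a)), h2]
    exact congrArg (μ {ω | S ω = s ∧ D ω = d} * ·) (hq s d a)
  -- split over S
  have hsplit : ∀ (t : Set Ω), MeasurableSet t →
      μ t = μ ({ω | S ω = true} ∩ t) + μ ({ω | S ω = false} ∩ t) := by
    intro t ht
    have hdisj : Disjoint ({ω | S ω = true} ∩ t) ({ω | S ω = false} ∩ t) := by
      rw [Set.disjoint_left]
      rintro ω ⟨h1, _⟩ ⟨h2, _⟩
      simp only [Set.mem_setOf_eq] at h1 h2
      rw [h1] at h2; exact Bool.noConfusion h2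
    have hm : MeasurableSet ({ω | S ω = false} ∩ t) :=
      (hS (measurableSet_singleton false)).inter ht
    have hu : t = ({ω | S ω = true} ∩ t) ∪ ({ω | S ω = false} ∩ t) := by
      ext ω
      rcases Bool.dichotomy (S ω) with h | h <;> simp [h]
    rw [← measure_union hdisj hm, ← hu]
  have hA : Measurable (fun ω => fA (S ω) (D ω) (UA ω)) := measurable_comp hS hD hUA hfA
  have hDd : MeasurableSet {ω | D ω = d} := hD (measurableSet_singleton d)
  have hAa : MeasurableSet {ω | fA (S ω) (D ω) (UA ω) = a} := hA (measurableSet_singleton a)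
  -- margins
  have margA : μ {ω | D ω = d ∧ fA (S ω) (D ω) (UA ω) = a}
      = μ {ω | D ω = d} * μ {ω | fA true d (UA ω) = a} := by
    have e1 : ∀ (s : Bool), {ω | S ω = s} ∩ {ω | D ω = d ∧ fA (S ω) (D ω) (UA ω) = a}
        = {ω | S ω = s ∧ D ω = d ∧ fA (S ω) (D ω) (UA ω) = a} := by
      intro s; ext ω; simp only [Set.mem_inter_iff, Set.mem_setOf_eq]
    have e2 : ∀ (s : Bool), {ω | S ω = s} ∩ {ω | D ω = d}
        = {ω | S ω = s ∧ D ω = d} := by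
      intro s; ext ω; simp only [Set.mem_inter_iff, Set.mem_setOf_eq]
    rw [hsplit {ω | D ω = d ∧ fA (S ω) (D ω) (UA ω) = a}
        (hDd.inter hAa : MeasurableSet {ω | D ω = d ∧ fA (S ω) (D ω) (UA ω) = a}),
      e1, e1, cell, cell, ← add_mul,
      hsplit {ω | D ω = d} hDd, e2, e2]
  -- express P sets
  have hPapp : ∀ (t : Set (Bool × 𝓓 × Bool)),
      P t = μ ((fun ω => (S ω, D ω, fA (S ω) (D ω) (UA ω))) ⁻¹' t) := by
    intro t
    rw [← hmap, Measure.map_apply hT (measurableSet_all t)]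
  rw [hPapp, hPapp, hPapp, hPapp]
  have p1 : (fun ω => (S ω, D ω, fA (S ω) (D ω) (UA ω))) ⁻¹'
      {v | v.1 = s ∧ v.2.1 = d ∧ v.2.2 = a}
      = {ω | S ω = s ∧ D ω = d ∧ fA (S ω) (D ω) (UA ω) = a} := rfl
  have p2 : (fun ω => (S ω, D ω, fA (S ω) (D ω) (UA ω))) ⁻¹' {v | v.2.1 = d}
      = {ω | D ω = d} := rfl
  have p3 : (fun ω => (S ω, D ω, fA (S ω) (D ω) (UA ω))) ⁻¹'
      {v | v.2.1 = d ∧ v.2.2 = a}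
      = {ω | D ω = d ∧ fA (S ω) (D ω) (UA ω) = a} := rfl
  have p4 : (fun ω => (S ω, D ω, fA (S ω) (D ω) (UA ω))) ⁻¹'
      {v | v.1 = s ∧ v.2.1 = d}
      = {ω | S ω = s ∧ D ω = d} := rfl
  rw [p1, p2, p3, p4, cell, margA]
  ring

variable {𝓓 Ω 𝓤A : Type} [MeasurableSpace 𝓓] [MeasurableSingletonClass 𝓓]
    [Fintype 𝓓] [MeasurableSpace Ω] [MeasurableSpace 𝓤A]
    {μ : Measure Ω} [IsProbabilityMeasure μ]
    {S : Ω → Bool} {D : Ω → 𝓓} {UA : Ω → 𝓤A} {fA : Bool → 𝓓 → 𝓤A → Bool}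

lemma compl_null_of_eq_one {E : Set Ω} (hE : MeasurableSet E) (h : μ E = 1) : μ Eᶜ = 0 := by
  rw [measure_compl hE (measure_ne_top μ E), h, measure_univ, tsub_self]

lemma meas_pair (hUA : Measurable UA) (hfA : ∀ s d, Measurable (fA s d)) (s s' : Bool) (d : 𝓓) :
    MeasurableSet {ω | fA s d (UA ω) = fA s' d (UA ω)} := by
  have h : {ω | fA s d (UA ω) = fA s' d (UA ω)} =
      ⋃ b : Bool, ((fun ω => fA s d (UA ω)) ⁻¹' {b} ∩ (fun ω => fA s' d (UA ω)) ⁻¹' {b}) := by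
    ext ω
    simp only [Set.mem_setOf_eq, Set.mem_iUnion, Set.mem_inter_iff, Set.mem_preimage,
      Set.mem_singleton_iff]
    constructor
    · intro h; exact ⟨fA s' d (UA ω), h, rfl⟩
    · rintro ⟨b, h1, h2⟩; rw [h1, h2]
  rw [h]
  exact MeasurableSet.iUnion fun b =>
    (((hfA s d).comp hUA (measurableSet_singleton b)).inter
      ((hfA s' d).comp hUA (measurableSet_singleton b)))

lemma meas_cf (hS : Measurable S) (hUA : Measurable UA) (hfA : ∀ s d, Measurable (fA s d))
    (s : Bool) (d : 𝓓) :
    MeasurableSet {ω | fA s d (UA ω) = fA (S ω) d (UA ω)} := by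
  have h : {ω | fA s d (UA ω) = fA (S ω) d (UA ω)} =
      ⋃ s' : Bool, ({ω | S ω = s'} ∩ {ω | fA s d (UA ω) = fA s' d (UA ω)}) := by
    ext ω
    simp only [Set.mem_setOf_eq, Set.mem_iUnion, Set.mem_inter_iff]
    constructor
    · intro h; exact ⟨S ω, rfl, h⟩
    · rintro ⟨s', h1, h2⟩; rw [← h1] at h2; exact h2
  rw [h]
  exact MeasurableSet.iUnion fun s' =>
    ((hS (measurableSet_singleton s')).inter (meas_pair hUA hfA s s' d))

lemma hq_of_compl_null
    (h : ∀ (s : Bool) (d : 𝓓), μ {ω | fA s d (UA ω) = fA true d (UA ω)}ᶜ = 0)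
    (s : Bool) (d : 𝓓) (a : Bool) :
    μ {ω | fA s d (UA ω) = a} = μ {ω | fA true d (UA ω) = a} := by
  apply measure_congr
  rw [MeasureTheory.ae_eq_set]
  constructor
  · refine measure_mono_null ?_ (h s d)
    rintro ω ⟨h1, h2⟩
    simp only [Set.mem_setOf_eq] at h1 h2 ⊢
    intro heq
    exact h2 (heq ▸ h1)
  · refine measure_mono_null ?_ (h s d)
    rintro ω ⟨h1, h2⟩
    simp only [Set.mem_setOf_eq] at h1 h2 ⊢
    intro heq
    exact h2 (heq ▸ h1)

lemma hq_of_graphical (hUA : Measurable UA) (hfA : ∀ s d, Measurable (fA s d))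
    (h : ∀ (d : 𝓓) (s s' : Bool), μ {ω | fA s d (UA ω) = fA s' d (UA ω)} = 1)
    (s : Bool) (d : 𝓓) (a : Bool) :
    μ {ω | fA s d (UA ω) = a} = μ {ω | fA true d (UA ω) = a} :=
  hq_of_compl_null (fun s d =>
    compl_null_of_eq_one (meas_pair hUA hfA s true d) (h d s true)) s d a

lemma hq_of_cf (hS : Measurable S) (hUA : Measurable UA) (hfA : ∀ s d, Measurable (fA s d))
    (h : ∀ (d : 𝓓) (s : Bool), μ {ω | fA s d (UA ω) = fA (S ω) d (UA ω)} = 1)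
    (s : Bool) (d : 𝓓) (a : Bool) :
    μ {ω | fA s d (UA ω) = a} = μ {ω | fA true d (UA ω) = a} := by
  refine hq_of_compl_null (fun s d => ?_) s d a
  have h1 : μ {ω | fA s d (UA ω) = fA (S ω) d (UA ω)}ᶜ = 0 :=
    compl_null_of_eq_one (meas_cf hS hUA hfA s d) (h d s)
  have h2 : μ {ω | fA true d (UA ω) = fA (S ω) d (UA ω)}ᶜ = 0 :=
    compl_null_of_eq_one (meas_cf hS hUA hfA true d) (h d true)
  refine measure_mono_null ?_ (measure_union_null h1 h2)
  intro ω hω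
  simp only [Set.mem_compl_iff, Set.mem_setOf_eq, Set.mem_union] at hω ⊢
  by_contra hc
  push_neg at hc
  exact hω (hc.1.trans hc.2.symm)

lemma hq_of_int (hUA : Measurable UA) (hfA : ∀ s d, Measurable (fA s d))
    (h : ∀ (d : 𝓓) (s : Bool),
      μ {ω | fA s d (UA ω) = true} = μ {ω | fA (S ω) d (UA ω) = true})
    (s : Bool) (d : 𝓓) (a : Bool) :
    μ {ω | fA s d (UA ω) = a} = μ {ω | fA true d (UA ω) = a} := by
  have key : ∀ s : Bool, μ {ω | fA s d (UA ω) = true} = μ {ω | fA true d (UA ω) = true} := by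
    intro s; rw [h d s, ← h d true]
  cases a
  · have hc : ∀ s : Bool, {ω | fA s d (UA ω) = false} = {ω | fA s d (UA ω) = true}ᶜ := by
      intro s; ext ω; simp
    have hm1 : MeasurableSet {ω | fA s d (UA ω) = true} :=
      (hfA s d).comp hUA (measurableSet_singleton true)
    have hm2 : MeasurableSet {ω | fA true d (UA ω) = true} :=
      (hfA true d).comp hUA (measurableSet_singleton true)
    rw [hc, hc, measure_compl hm1 (measure_ne_top _ _),
      measure_compl hm2 (measure_ne_top _ _), key s]
  · exact key s

lemma cross_ennreal (x x' y y' b c : ℝ≥0∞) (h1 : b = x + x') (h2 : c = y + y')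
    (hbc : b ≤ c) (hcT : c ≠ ∞) (hdiv : 0 < b → x / b = y / c) :
    x * c = y * b ∧ x' * c = y' * b := by
  have hbT : b ≠ ∞ := fun h => hcT (top_le_iff.mp (h ▸ hbc))
  have hyT : y ≠ ∞ := fun h => hcT (by rw [h2, h]; exact top_add y')
  rcases eq_or_lt_of_le (zero_le : 0 ≤ b) with hb0 | hb0
  · have hx0 : x = 0 := by
      have := h1.symm.trans hb0.symm
      exact (add_eq_zero.mp this).1
    have hx'0 : x' = 0 := by
      have := h1.symm.trans hb0.symm
      exact (add_eq_zero.mp this).2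
    rw [hx0, hx'0, ← hb0]
    simp
  · have hc0 : c ≠ 0 := fun h0 => by
      rw [h0] at hbc
      exact absurd (le_antisymm hbc (zero_le : 0 ≤ b)) (ne_of_gt hb0)
    have hcross : x * c = y * b := by
      have hdiv' := hdiv hb0
      rw [ENNReal.div_eq_div_iff hc0 hcT (ne_of_gt hb0) hbT] at hdiv'
      rw [mul_comm x c, mul_comm y b]; exact hdiv'
    refine ⟨hcross, ?_⟩
    have hsum : x' * c + x * c = y' * b + y * b := by
      rw [← add_mul, ← add_mul, add_comm x' x, add_comm y' y, ← h1, ← h2, mul_comm b c]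
    rw [hcross] at hsum
    exact (ENNReal.add_left_inj (ENNReal.mul_ne_top hyT hbT)).mp hsum

lemma obsci_of_cond {𝓓 : Type} [MeasurableSpace 𝓓] [MeasurableSingletonClass 𝓓] [Fintype 𝓓]
    (P : Measure (Bool × 𝓓 × Bool)) [IsProbabilityMeasure P]
    (h : ∀ (s : Bool) (d : 𝓓), 0 < P {v | v.1 = s ∧ v.2.1 = d} →
      P {v | v.1 = s ∧ v.2.1 = d ∧ v.2.2 = true} / P {v | v.1 = s ∧ v.2.1 = d}
        = P {v | v.2.1 = d ∧ v.2.2 = true} / P {v | v.2.1 = d}) :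
    ObsCI P := by
  intro s d a
  have hsplit1 : P {v : Bool × 𝓓 × Bool | v.1 = s ∧ v.2.1 = d}
      = P {v | v.1 = s ∧ v.2.1 = d ∧ v.2.2 = true}
        + P {v | v.1 = s ∧ v.2.1 = d ∧ v.2.2 = false} := by
    rw [← measure_union ?_ (Set.Finite.measurableSet (Set.toFinite _))]
    · congr 1
      ext v
      rcases Bool.dichotomy v.2.2 with hv | hv <;> simp [hv, and_assoc]
    · rw [Set.disjoint_left]
      rintro v ⟨_, _, h1⟩ ⟨_, _, h2⟩
      rw [h1] at h2; exact Bool.noConfusion h2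
  have hsplit2 : P {v : Bool × 𝓓 × Bool | v.2.1 = d}
      = P {v | v.2.1 = d ∧ v.2.2 = true} + P {v | v.2.1 = d ∧ v.2.2 = false} := by
    rw [← measure_union ?_ (Set.Finite.measurableSet (Set.toFinite _))]
    · congr 1
      ext v
      rcases Bool.dichotomy v.2.2 with hv | hv <;> simp [hv]
    · rw [Set.disjoint_left]
      rintro v ⟨_, h1⟩ ⟨_, h2⟩
      rw [h1] at h2; exact Bool.noConfusion h2
  have hbc : P {v : Bool × 𝓓 × Bool | v.1 = s ∧ v.2.1 = d}
      ≤ P {v : Bool × 𝓓 × Bool | v.2.1 = d} :=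
    measure_mono (fun v hv => hv.2)
  have key := cross_ennreal _ _ _ _ _ _ hsplit1 hsplit2 hbc (measure_ne_top P _) (h s d)
  cases a
  · exact key.2
  · exact key.1

noncomputable def bern (q : ℝ≥0∞) : Measure Bool :=
  q • Measure.dirac true + (1 - q) • Measure.dirac false

lemma bern_true (q : ℝ≥0∞) : bern q {true} = q := by
  simp [bern, Measure.dirac_apply]

lemma bern_false (q : ℝ≥0∞) : bern q {false} = 1 - q := by
  simp [bern, Measure.dirac_apply]

lemma bern_prob {q : ℝ≥0∞} (hq : q ≤ 1) : IsProbabilityMeasure (bern q) := by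
  constructor
  have : (Set.univ : Set Bool) = {true} ∪ {false} := by
    ext b; cases b <;> simp
  rw [this, measure_union (by simp) (measurableSet_singleton false), bern_true, bern_false,
    add_tsub_cancel_of_le hq]

lemma pi_marginal {𝓓 : Type} [MeasurableSpace 𝓓] [MeasurableSingletonClass 𝓓] [Fintype 𝓓]
    (q : 𝓓 → ℝ≥0∞) (hq : ∀ d, q d ≤ 1) (d : 𝓓) (a : Bool) :
    Measure.pi (fun d => bern (q d)) {u : 𝓓 → Bool | u d = a} = bern (q d) {a} := by
  classical
  haveI : ∀ i, IsProbabilityMeasure (bern (q i)) := fun i => bern_prob (hq i)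
  have hset : {u : 𝓓 → Bool | u d = a} =
      Set.pi Set.univ (fun i => if i = d then ({a} : Set Bool) else Set.univ) := by
    ext u
    simp only [Set.mem_setOf_eq, Set.mem_pi, Set.mem_univ, forall_true_left]
    constructor
    · intro h i
      by_cases hi : i = d
      · subst hi; simp [h]
      · simp [hi]
    · intro h
      have := h d
      simpa using this
  rw [hset, Measure.pi_pi]
  rw [Finset.prod_eq_single d]
  · simp
  · intro i _ hi; rw [if_neg hi]; exact measure_univ
  · intro h; exact absurd (Finset.mem_univ d) h

lemma indep_fst_snd {α β : Type*} [MeasurableSpace α] [MeasurableSpace β]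
    (μ : Measure α) (ν : Measure β) [IsProbabilityMeasure μ] [IsProbabilityMeasure ν] :
    IndepFun Prod.fst Prod.snd (μ.prod ν) := by
  rw [indepFun_iff_measure_inter_preimage_eq_mul]
  intro s t hs ht
  have h1 : Prod.fst ⁻¹' s ∩ Prod.snd ⁻¹' t = s ×ˢ t := (Set.prod_eq s t).symm
  have h2 : (Prod.fst ⁻¹' s : Set (α × β)) = s ×ˢ Set.univ := by ext; simp
  have h3 : (Prod.snd ⁻¹' t : Set (α × β)) = Set.univ ×ˢ t := by ext; simp
  rw [h1, h2, h3, Measure.prod_prod, Measure.prod_prod, Measure.prod_prod]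
  simp

lemma ext_singletons {α : Type*} [MeasurableSpace α] [MeasurableSingletonClass α]
    [Fintype α] {μ ν : Measure α} (h : ∀ a, μ {a} = ν {a}) : μ = ν := by
  classical
  ext s _
  have hs : s = ⋃ x ∈ s.toFinset, ({x} : Set α) := by
    ext x; simp
  have hd : (s.toFinset : Set α).PairwiseDisjoint (fun x => ({x} : Set α)) := by
    intro x _ y _ hxy
    simp [Set.disjoint_singleton, hxy]
  rw [hs, measure_biUnion_finset hd (fun i _ => measurableSet_singleton i),
    measure_biUnion_finset hd (fun i _ => measurableSet_singleton i)]
  exact Finset.sum_congr rfl fun x _ => h x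

section Construction

variable {𝓓 : Type} [MeasurableSpace 𝓓] [MeasurableSingletonClass 𝓓] [Fintype 𝓓]
  (P : Measure (Bool × 𝓓 × Bool)) [IsProbabilityMeasure P]

noncomputable def margSD : Measure (Bool × 𝓓) := P.map (fun v => (v.1, v.2.1))

noncomputable def pprob (d : 𝓓) : ℝ≥0∞ :=
  P {v | v.2.1 = d ∧ v.2.2 = true} / P {v | v.2.1 = d}

lemma pprob_le_one (d : 𝓓) : pprob P d ≤ 1 :=
  ENNReal.div_le_of_le_mul (by rw [one_mul]; exact measure_mono fun v hv => hv.1)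

noncomputable def nuP : Measure (𝓓 → Bool) := Measure.pi (fun d => bern (pprob P d))

instance : IsProbabilityMeasure (nuP P) := by
  haveI : ∀ i, IsProbabilityMeasure (bern (pprob P i)) := fun i => bern_prob (pprob_le_one P i)
  exact MeasureTheory.Measure.pi.instIsProbabilityMeasure _

instance : IsProbabilityMeasure (margSD P) :=
  Measure.isProbabilityMeasure_map ((measurable_fst.prodMk
    (measurable_fst.comp measurable_snd)).aemeasurable)

lemma margSD_apply (s : Bool) (d : 𝓓) :
    margSD P {(s, d)} = P {v | v.1 = s ∧ v.2.1 = d} := by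
  have hm : Measurable (fun v : Bool × 𝓓 × Bool => (v.1, v.2.1)) := by fun_prop
  rw [margSD, Measure.map_apply hm (measurableSet_singleton _)]
  congr 1
  ext v
  simp [Prod.ext_iff]

lemma nuP_marg (d : 𝓓) (a : Bool) :
    nuP P {u : 𝓓 → Bool | u d = a} = bern (pprob P d) {a} :=
  pi_marginal _ (pprob_le_one P) d a

lemma split_marg (d : 𝓓) : P {v : Bool × 𝓓 × Bool | v.2.1 = d}
    = P {v | v.2.1 = d ∧ v.2.2 = true} + P {v | v.2.1 = d ∧ v.2.2 = false} := by
  rw [← measure_union ?_ (Set.Finite.measurableSet (Set.toFinite _))]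
  · congr 1
    ext v
    rcases Bool.dichotomy v.2.2 with hv | hv <;> simp [hv]
  · rw [Set.disjoint_left]
    rintro v ⟨_, h1⟩ ⟨_, h2⟩
    rw [h1] at h2; exact Bool.noConfusion h2

lemma bern_pprob_apply (d : 𝓓) (a : Bool) (hc : P {v : Bool × 𝓓 × Bool | v.2.1 = d} ≠ 0) :
    bern (pprob P d) {a} = P {v | v.2.1 = d ∧ v.2.2 = a} / P {v | v.2.1 = d} := by
  have hcT : P {v : Bool × 𝓓 × Bool | v.2.1 = d} ≠ ∞ := measure_ne_top P _
  cases a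
  · rw [bern_false, pprob]
    have hsum : P {v : Bool × 𝓓 × Bool | v.2.1 = d ∧ v.2.2 = true}
          / P {v : Bool × 𝓓 × Bool | v.2.1 = d}
        + P {v : Bool × 𝓓 × Bool | v.2.1 = d ∧ v.2.2 = false}
          / P {v : Bool × 𝓓 × Bool | v.2.1 = d} = 1 := by
      rw [ENNReal.div_add_div_same, ← split_marg, ENNReal.div_self hc hcT]
    rw [← hsum, ENNReal.add_sub_cancel_left (ENNReal.div_lt_top (measure_ne_top P _) hc).ne]
  · rw [bern_true, pprob]

lemma key_cell (hP : ObsCI P) (s : Bool) (d : 𝓓) (a : Bool) :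
    P {v | v.1 = s ∧ v.2.1 = d} * bern (pprob P d) {a}
      = P {v | v.1 = s ∧ v.2.1 = d ∧ v.2.2 = a} := by
  by_cases hc : P {v : Bool × 𝓓 × Bool | v.2.1 = d} = 0
  · have hb0 : P {v : Bool × 𝓓 × Bool | v.1 = s ∧ v.2.1 = d} = 0 :=
      le_antisymm (hc ▸ measure_mono fun v hv => hv.2) (zero_le)
    have hx0 : P {v : Bool × 𝓓 × Bool | v.1 = s ∧ v.2.1 = d ∧ v.2.2 = a} = 0 :=
      le_antisymm (hb0 ▸ measure_mono fun v hv => ⟨hv.1, hv.2.1⟩) (zero_le)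
    rw [hb0, hx0, zero_mul]
  · have hcT : P {v : Bool × 𝓓 × Bool | v.2.1 = d} ≠ ∞ := measure_ne_top P _
    rw [bern_pprob_apply P d a hc, ← mul_div_assoc, mul_comm,
      ← hP s d a, mul_div_assoc, ENNReal.div_self hc hcT, mul_one]

lemma T_meas : Measurable (fun ω : (Bool × 𝓓) × (𝓓 → Bool)
    => (ω.1.1, ω.1.2, ω.2 ω.1.2)) := by
  refine ((measurable_fst.comp measurable_fst).prodMk
    ((measurable_snd.comp measurable_fst).prodMk ?_))
  have : Countable 𝓓 := Finite.to_countable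
  apply measurable_to_countable'
  intro a
  have h : (fun ω : (Bool × 𝓓) × (𝓓 → Bool) => ω.2 ω.1.2) ⁻¹' {a} =
      ⋃ d : 𝓓, ({ω : (Bool × 𝓓) × (𝓓 → Bool) | ω.1.2 = d} ∩ {ω | ω.2 d = a}) := by
    ext ω
    simp only [Set.mem_preimage, Set.mem_singleton_iff, Set.mem_iUnion, Set.mem_inter_iff,
      Set.mem_setOf_eq]
    constructor
    · intro h; exact ⟨ω.1.2, rfl, h⟩
    · rintro ⟨d, h1, h2⟩; rw [h1]; exact h2
  rw [h]
  refine MeasurableSet.iUnion fun d => MeasurableSet.inter ?_ ?_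
  · exact (measurable_snd.comp measurable_fst) (measurableSet_singleton d)
  · have hm2 : Measurable (fun ω : (Bool × 𝓓) × (𝓓 → Bool) => ω.2 d) :=
      (measurable_pi_apply d).comp measurable_snd
    exact hm2 (measurableSet_singleton a)

lemma map_eq (hP : ObsCI P) :
    Measure.map (fun ω : (Bool × 𝓓) × (𝓓 → Bool) => (ω.1.1, ω.1.2, ω.2 ω.1.2))
      ((margSD P).prod (nuP P)) = P := by
  apply ext_singletons
  rintro ⟨s, d, a⟩
  rw [Measure.map_apply (T_meas (𝓓 := 𝓓)) (measurableSet_singleton _)]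
  have hpre : (fun ω : (Bool × 𝓓) × (𝓓 → Bool) => (ω.1.1, ω.1.2, ω.2 ω.1.2)) ⁻¹' {(s, d, a)}
      = ({(s, d)} : Set (Bool × 𝓓)) ×ˢ {u : 𝓓 → Bool | u d = a} := by
    ext ω
    simp only [Set.mem_preimage, Set.mem_singleton_iff, Set.mem_prod, Set.mem_setOf_eq,
      Prod.ext_iff]
    constructor
    · rintro ⟨h1, h2, h3⟩
      exact ⟨⟨h1, h2⟩, h2 ▸ h3⟩
    · rintro ⟨⟨h1, h2⟩, h3⟩
      exact ⟨h1, h2, h2.symm ▸ h3⟩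
  rw [hpre, Measure.prod_prod, margSD_apply, nuP_marg, key_cell P hP]
  congr 1
  ext v
  simp [Prod.ext_iff]

end Construction

section Construction2
variable {𝓓 : Type} [MeasurableSpace 𝓓] [MeasurableSingletonClass 𝓓] [Fintype 𝓓]
  (P : Measure (Bool × 𝓓 × Bool)) [IsProbabilityMeasure P]

lemma obs_fair (d : 𝓓) (s : Bool)
    (hpos : 0 < (margSD P).prod (nuP P) {ω | ω.1.1 = s ∧ ω.1.2 = d}) :
    (margSD P).prod (nuP P) {ω | ω.2 ω.1.2 = true ∧ ω.1.1 = s ∧ ω.1.2 = d}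
        / (margSD P).prod (nuP P) {ω | ω.1.1 = s ∧ ω.1.2 = d}
      = (margSD P).prod (nuP P) {ω | ω.2 ω.1.2 = true ∧ ω.1.2 = d}
        / (margSD P).prod (nuP P) {ω | ω.1.2 = d} := by
  have e1 : {ω : (Bool × 𝓓) × (𝓓 → Bool) | ω.1.1 = s ∧ ω.1.2 = d}
      = ({(s, d)} : Set (Bool × 𝓓)) ×ˢ (Set.univ : Set (𝓓 → Bool)) := by
    ext ω
    simp only [Set.mem_setOf_eq, Set.mem_prod, Set.mem_singleton_iff, Set.mem_univ,
      and_true, Prod.ext_iff]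
  have e2 : {ω : (Bool × 𝓓) × (𝓓 → Bool) | ω.2 ω.1.2 = true ∧ ω.1.1 = s ∧ ω.1.2 = d}
      = ({(s, d)} : Set (Bool × 𝓓)) ×ˢ {u : 𝓓 → Bool | u d = true} := by
    ext ω
    simp only [Set.mem_setOf_eq, Set.mem_prod, Set.mem_singleton_iff, Prod.ext_iff]
    constructor
    · rintro ⟨h1, h2, h3⟩; exact ⟨⟨h2, h3⟩, h3 ▸ h1⟩
    · rintro ⟨⟨h1, h2⟩, h3⟩; exact ⟨h2.symm ▸ h3, h1, h2⟩
  have e3 : {ω : (Bool × 𝓓) × (𝓓 → Bool) | ω.1.2 = d}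
      = {p : Bool × 𝓓 | p.2 = d} ×ˢ (Set.univ : Set (𝓓 → Bool)) := by
    ext ω; simp
  have e4 : {ω : (Bool × 𝓓) × (𝓓 → Bool) | ω.2 ω.1.2 = true ∧ ω.1.2 = d}
      = {p : Bool × 𝓓 | p.2 = d} ×ˢ {u : 𝓓 → Bool | u d = true} := by
    ext ω
    simp only [Set.mem_setOf_eq, Set.mem_prod]
    constructor
    · rintro ⟨h1, h2⟩; exact ⟨h2, h2 ▸ h1⟩
    · rintro ⟨h1, h2⟩; exact ⟨h1.symm ▸ h2, h1⟩
  rw [e1] at hpos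
  rw [Measure.prod_prod, measure_univ, mul_one] at hpos
  have hm0 : margSD P {(s, d)} ≠ 0 := ne_of_gt hpos
  have hm'0 : margSD P {p : Bool × 𝓓 | p.2 = d} ≠ 0 := by
    refine ne_of_gt (lt_of_lt_of_le hpos (measure_mono ?_))
    rintro p hp
    rw [Set.mem_singleton_iff] at hp
    rw [hp]
    rfl
  have cancel : ∀ (m q : ℝ≥0∞), m ≠ 0 → m ≠ ∞ → m * q / m = q := by
    intro m q h0 hT
    rw [mul_comm, mul_div_assoc, ENNReal.div_self h0 hT, mul_one]
  rw [e1, e2, e3, e4, Measure.prod_prod, Measure.prod_prod, Measure.prod_prod,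
    Measure.prod_prod, measure_univ, mul_one, mul_one,
    cancel _ _ hm0 (measure_ne_top _ _), cancel _ _ hm'0 (measure_ne_top _ _)]

end Construction2

end Stmt11Aux

open Stmt11Aux

/-- For the no-confounding model class, the sets of observational
distributions induced by the graphical, counterfactual, interventional and
observational fairness null hypotheses all coincide with the set of joint
distributions satisfying `A ⟂ S | D`.  In particular any distribution with
`A ⟂ S | D` is realized by an SCM in which `S` is not a parent of `A`. -/
theorem stmt11 {𝓓 : Type} [MeasurableSpace 𝓓] [MeasurableSingletonClass 𝓓]
    [Fintype 𝓓] (P : Measure (Bool × 𝓓 × Bool)) [IsProbabilityMeasure P] :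
    -- graphical: `S` is not a parent of `A`
    (RealizableNoCf P (fun μ _ _ UA fA =>
        ∀ (d : 𝓓) (s s' : Bool),
          μ {ω | fA s d (UA ω) = fA s' d (UA ω)} = 1) ↔ ObsCI P)
    -- counterfactual: `A^{do(S=s,D=d)} = A^{do(D=d)}` a.s.
    ∧ (RealizableNoCf P (fun μ S _ UA fA =>
        ∀ (d : 𝓓) (s : Bool),
          μ {ω | fA s d (UA ω) = fA (S ω) d (UA ω)} = 1) ↔ ObsCI P)
    -- interventional: `P(A=1|do(S=s),do(D=d)) = P(A=1|do(D=d))`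
    ∧ (RealizableNoCf P (fun μ S _ UA fA =>
        ∀ (d : 𝓓) (s : Bool),
          μ {ω | fA s d (UA ω) = true}
            = μ {ω | fA (S ω) d (UA ω) = true}) ↔ ObsCI P)
    -- observational: `P(A=1|S=s,D=d) = P(A=1|D=d)` on positive cells
    ∧ (RealizableNoCf P (fun μ S D UA fA =>
        ∀ (d : 𝓓) (s : Bool), 0 < μ {ω | S ω = s ∧ D ω = d} →
          μ {ω | fA (S ω) (D ω) (UA ω) = true ∧ S ω = s ∧ D ω = d}
              / μ {ω | S ω = s ∧ D ω = d}
            = μ {ω | fA (S ω) (D ω) (UA ω) = true ∧ D ω = d}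
              / μ {ω | D ω = d}) ↔ ObsCI P) := by
  have backward : ∀ fair : (∀ {Ω 𝓤A : Type} [MeasurableSpace Ω], Measure Ω →
        (Ω → Bool) → (Ω → 𝓓) → (Ω → 𝓤A) →
        (Bool → 𝓓 → 𝓤A → Bool) → Prop), ObsCI P →
      fair ((margSD P).prod (nuP P)) (fun ω => ω.1.1) (fun ω => ω.1.2)
          (fun ω => ω.2) (fun _ d u => u d) →
      RealizableNoCf P fair := by
    intro fair h hfair
    refine ⟨(Bool × 𝓓) × (𝓓 → Bool), 𝓓 → Bool, inferInstance, inferInstance,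
      (margSD P).prod (nuP P), inferInstance,
      fun ω => ω.1.1, fun ω => ω.1.2, fun ω => ω.2, fun _ d u => u d,
      measurable_fst.comp measurable_fst, measurable_snd.comp measurable_fst,
      measurable_snd, fun s d => measurable_pi_apply d,
      indep_fst_snd (margSD P) (nuP P), hfair, map_eq P h⟩
  refine ⟨⟨?_, ?_⟩, ⟨?_, ?_⟩, ⟨?_, ?_⟩, ⟨?_, ?_⟩⟩
  · rintro ⟨Ω, 𝓤A, mΩ, m𝓤A, μ, hprob, S, D, UA, fA, hS, hD, hUA, hfA, hind, hfair, hmap⟩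
    haveI := hprob
    exact forward_core μ hS hD hUA hfA hind (hq_of_graphical hUA hfA hfair) P hmap
  · intro h
    refine backward _ h ?_
    intro d s s'
    have : {ω : (Bool × 𝓓) × (𝓓 → Bool) | ω.2 d = ω.2 d} = Set.univ := by
      ext ω; simp
    rw [this]
    exact measure_univ
  · rintro ⟨Ω, 𝓤A, mΩ, m𝓤A, μ, hprob, S, D, UA, fA, hS, hD, hUA, hfA, hind, hfair, hmap⟩
    haveI := hprob
    exact forward_core μ hS hD hUA hfA hind (hq_of_cf hS hUA hfA hfair) P hmap
  · intro h
    refine backward _ h ?_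
    intro d s
    have : {ω : (Bool × 𝓓) × (𝓓 → Bool) | ω.2 d = ω.2 d} = Set.univ := by
      ext ω; simp
    rw [this]
    exact measure_univ
  · rintro ⟨Ω, 𝓤A, mΩ, m𝓤A, μ, hprob, S, D, UA, fA, hS, hD, hUA, hfA, hind, hfair, hmap⟩
    haveI := hprob
    exact forward_core μ hS hD hUA hfA hind (hq_of_int hUA hfA hfair) P hmap
  · intro h
    refine backward _ h ?_
    intro d s
    rfl
  · rintro ⟨Ω, 𝓤A, mΩ, m𝓤A, μ, hprob, S, D, UA, fA, hS, hD, hUA, hfA, hind, hfair, hmap⟩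
    haveI := hprob
    have hT : Measurable (fun ω => (S ω, D ω, fA (S ω) (D ω) (UA ω))) :=
      (hS.prodMk (hD.prodMk (measurable_comp hS hD hUA hfA)))
    have hPapp : ∀ (t : Set (Bool × 𝓓 × Bool)),
        P t = μ ((fun ω => (S ω, D ω, fA (S ω) (D ω) (UA ω))) ⁻¹' t) := by
      intro t
      rw [← hmap, Measure.map_apply hT (measurableSet_all t)]
    apply obsci_of_cond
    intro s d hpos
    rw [hPapp] at hpos
    have hfd := hfair d s hpos
    have e1 : {ω | fA (S ω) (D ω) (UA ω) = true ∧ S ω = s ∧ D ω = d}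
        = {ω | S ω = s ∧ D ω = d ∧ fA (S ω) (D ω) (UA ω) = true} := by
      ext ω; simp only [Set.mem_setOf_eq]; tauto
    have e2 : {ω | fA (S ω) (D ω) (UA ω) = true ∧ D ω = d}
        = {ω | D ω = d ∧ fA (S ω) (D ω) (UA ω) = true} := by
      ext ω; simp only [Set.mem_setOf_eq]; tauto
    rw [e1, e2] at hfd
    rw [hPapp, hPapp, hPapp, hPapp]
    exact hfd
  · intro h
    refine backward _ h ?_
    intro d s hpos
    exact obs_fair P d s hpos
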